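/- Let μ > 0 and ν > 0, and set r = ν/μ. Define G(z,t) = ( 1 / (1 + μ·t·(1−z)) )^r for z ∈ [0,1] and t ≥ 0. Then G satisfies the partial differential equation ∂G/∂t = (z−1)·[ (μ z − μ)·∂G/∂z + ν·G(z,t) ] for all z ∈ [0,1] and t ≥ 0, with G(z,0) = 1. -/

import Mathlib

/-- The critical case `λ = μ`: the PGF `G(z,t) = (1/(1 + μt(1−z)))^r` with `μ > 0`,
`ν > 0`, `r = ν/μ` satisfies `∂G/∂t = (z−1)[(μz−μ)∂G/∂z + νG]` on `[0,1] × [0,∞)`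
with `G(z,0) = 1`. -/
theorem stmt_12 (mu nu r : ℝ) (hmu : 0 < mu) (hnu : 0 < nu) (hr : r = nu / mu)
    (G : ℝ → ℝ → ℝ)
    (hG : ∀ z t : ℝ, G z t = (1 / (1 + mu * t * (1 - z))) ^ r) :
    (∀ z ∈ Set.Icc (0:ℝ) 1, ∀ t : ℝ, 0 ≤ t →
      deriv (fun s => G z s) t =
        (z - 1) * ((mu * z - mu) * deriv (fun w => G w t) z + nu * G z t)) ∧
    (∀ z ∈ Set.Icc (0:ℝ) 1, G z 0 = 1) := by
  constructor
  · intro z hz t ht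
    have hz1 : (0:ℝ) ≤ 1 - z := by linarith [hz.2]
    have hu : (0:ℝ) < 1 + mu * t * (1 - z) := by
      nlinarith [mul_nonneg (mul_nonneg hmu.le ht) hz1]
    have hune : (1 + mu * t * (1 - z)) ≠ 0 := ne_of_gt hu
    have hinvne : (1 + mu * t * (1 - z))⁻¹ ≠ 0 := inv_ne_zero hune
    -- derivative in t
    have h1 : HasDerivAt (fun s : ℝ => 1 + mu * s * (1 - z)) (mu * (1 - z)) t := by
      have : HasDerivAt (fun s : ℝ => mu * s * (1 - z)) (mu * 1 * (1 - z)) t :=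
        ((hasDerivAt_id t).const_mul mu).mul_const (1 - z)
      simpa using this.const_add 1
    have h2 : HasDerivAt (fun s : ℝ => (1 + mu * s * (1 - z))⁻¹)
        (-(mu * (1 - z)) / (1 + mu * t * (1 - z)) ^ 2) t := h1.inv hune
    have h3 : HasDerivAt (fun s : ℝ => ((1 + mu * s * (1 - z))⁻¹) ^ r)
        (-(mu * (1 - z)) / (1 + mu * t * (1 - z)) ^ 2 * r *
          ((1 + mu * t * (1 - z))⁻¹) ^ (r - 1)) t :=
      h2.rpow_const (Or.inl hinvne)
    have hDt : deriv (fun s => G z s) t =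
        -(mu * (1 - z)) / (1 + mu * t * (1 - z)) ^ 2 * r *
          ((1 + mu * t * (1 - z))⁻¹) ^ (r - 1) := by
      have : (fun s => G z s) = fun s : ℝ => ((1 + mu * s * (1 - z))⁻¹) ^ r := by
        funext s; rw [hG, one_div]
      rw [this, h3.deriv]
    -- derivative in z
    have g1 : HasDerivAt (fun w : ℝ => 1 + mu * t * (1 - w)) (-(mu * t)) z := by
      have : HasDerivAt (fun w : ℝ => 1 - w) (-1 : ℝ) z := by
        simpa using (hasDerivAt_id z).const_sub 1
      simpa [mul_comm, mul_assoc] using (this.const_mul (mu * t)).const_add 1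
    have g2 : HasDerivAt (fun w : ℝ => (1 + mu * t * (1 - w))⁻¹)
        (-(-(mu * t)) / (1 + mu * t * (1 - z)) ^ 2) z := g1.inv hune
    have g3 : HasDerivAt (fun w : ℝ => ((1 + mu * t * (1 - w))⁻¹) ^ r)
        (-(-(mu * t)) / (1 + mu * t * (1 - z)) ^ 2 * r *
          ((1 + mu * t * (1 - z))⁻¹) ^ (r - 1)) z :=
      g2.rpow_const (Or.inl hinvne)
    have hDz : deriv (fun w => G w t) z =
        -(-(mu * t)) / (1 + mu * t * (1 - z)) ^ 2 * r *
          ((1 + mu * t * (1 - z))⁻¹) ^ (r - 1) := by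
      have : (fun w => G w t) = fun w : ℝ => ((1 + mu * t * (1 - w))⁻¹) ^ r := by
        funext w; rw [hG, one_div]
      rw [this, g3.deriv]
    have hGzt : G z t = ((1 + mu * t * (1 - z))⁻¹) ^ (r - 1) *
        (1 + mu * t * (1 - z))⁻¹ := by
      rw [hG, one_div]
      rw [show r = (r - 1) + 1 by ring,
        Real.rpow_add (inv_pos.mpr hu), Real.rpow_one]
      ring_nf
    have hnu' : nu = r * mu := by
      rw [hr]
      field_simp [hr, hmu.ne']
    rw [hDt, hDz, hGzt, hnu']
    field_simp
    ring
  · intro z hz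
    rw [hG]
    norm_num
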